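/- Let T be an m × m integer matrix with det T ≠ 0 all of whose eigenvalues equal 1. Then the group G(m,T) = ⟨a₁,…,a_m,t | [aᵢ,aⱼ]=1, t a^u t⁻¹ = a^{Tu}⟩ is nilpotent. -/

import Mathlib

noncomputable section

/-- Ball of radius `n` in the word metric with respect to a generating set `Y`. -/
def wordBall {G : Type*} [Group G] (Y : Set G) (n : ℕ) : Set G :=
  {g | ∃ l : List G, (∀ x ∈ l, x ∈ Y ∨ x⁻¹ ∈ Y) ∧ l.length ≤ n ∧ l.prod = g}

/-- Relations of the ascending HNN-extension `G(m,T)`. -/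
def gmtRels (m : ℕ) (T : Matrix (Fin m) (Fin m) ℤ) : Set (FreeGroup (Fin m ⊕ Unit)) :=
  {r | (∃ i j : Fin m,
          r = FreeGroup.of (Sum.inl i) * FreeGroup.of (Sum.inl j) *
              (FreeGroup.of (Sum.inl i))⁻¹ * (FreeGroup.of (Sum.inl j))⁻¹) ∨
       (∃ i : Fin m,
          r = FreeGroup.of (Sum.inr ()) * FreeGroup.of (Sum.inl i) *
              (FreeGroup.of (Sum.inr ()))⁻¹ *
              ((List.ofFn fun j : Fin m => FreeGroup.of (Sum.inl j) ^ (T j i)).prod)⁻¹)}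

/-- The ascending HNN-extension `G(m,T)` of `ℤ^m` determined by `T`. -/
abbrev GmT (m : ℕ) (T : Matrix (Fin m) (Fin m) ℤ) : Type := PresentedGroup (gmtRels m T)

def gmtA (m : ℕ) (T : Matrix (Fin m) (Fin m) ℤ) (i : Fin m) : GmT m T :=
  PresentedGroup.of (Sum.inl i)

def gmtT (m : ℕ) (T : Matrix (Fin m) (Fin m) ℤ) : GmT m T :=
  PresentedGroup.of (Sum.inr ())

/-- `a^u = a₁^{u₁} ⋯ a_m^{u_m}`. -/
def gmtAProd (m : ℕ) (T : Matrix (Fin m) (Fin m) ℤ) (u : Fin m → ℤ) : GmT m T :=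
  (List.ofFn fun i => gmtA m T i ^ (u i)).prod

lemma gmtTauAux (m : ℕ) (T : Matrix (Fin m) (Fin m) ℤ) :
    ∀ r ∈ gmtRels m T,
      (FreeGroup.lift (Sum.elim (fun _ : Fin m => (1 : Multiplicative ℤ))
        (fun _ : Unit => Multiplicative.ofAdd 1))) r = 1 := by
  rintro r (⟨i, j, rfl⟩ | ⟨i, rfl⟩) <;>
    simp [map_mul, map_inv, map_list_prod, List.map_ofFn, Function.comp, map_zpow,
      List.prod_ofFn]

/-- The `t`-exponent homomorphism `τ`. -/
def gmtTau (m : ℕ) (T : Matrix (Fin m) (Fin m) ℤ) : GmT m T →* Multiplicative ℤ :=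
  PresentedGroup.toGroup (gmtTauAux m T)

/-- The elliptic subgroup `A(m,T) = ker τ`. -/
def gmtElliptic (m : ℕ) (T : Matrix (Fin m) (Fin m) ℤ) : Subgroup (GmT m T) :=
  (gmtTau m T).ker



section ListLemmas
variable {G : Type*} [Group G]

lemma gmtAux_ofFn_zpow_mul : ∀ (k : ℕ) (g : Fin k → G)
    (_ : ∀ i j, Commute (g i) (g j)) (u v : Fin k → ℤ),
    (List.ofFn fun i => g i ^ u i).prod * (List.ofFn fun i => g i ^ v i).prod
      = (List.ofFn fun i => g i ^ (u i + v i)).prod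
  | 0, g, hc, u, v => by simp
  | (k+1), g, hc, u, v => by
    have IH := gmtAux_ofFn_zpow_mul k (fun i => g i.succ) (fun i j => hc _ _)
      (fun i => u i.succ) (fun i => v i.succ)
    have hcom : Commute (g 0 ^ v 0) ((List.ofFn fun i : Fin k => g i.succ ^ u i.succ).prod) := by
      apply Commute.list_prod_right
      intro x hx
      rw [List.mem_ofFn] at hx
      obtain ⟨i, rfl⟩ := hx
      exact (hc 0 i.succ).zpow_zpow _ _
    simp only [List.ofFn_succ, List.prod_cons]
    calc g 0 ^ u 0 * (List.ofFn fun i : Fin k => g i.succ ^ u i.succ).prod *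
          (g 0 ^ v 0 * (List.ofFn fun i : Fin k => g i.succ ^ v i.succ).prod)
        = g 0 ^ u 0 * (((List.ofFn fun i : Fin k => g i.succ ^ u i.succ).prod * g 0 ^ v 0) *
            (List.ofFn fun i : Fin k => g i.succ ^ v i.succ).prod) := by
          simp only [mul_assoc]
      _ = g 0 ^ u 0 * ((g 0 ^ v 0 * (List.ofFn fun i : Fin k => g i.succ ^ u i.succ).prod) *
            (List.ofFn fun i : Fin k => g i.succ ^ v i.succ).prod) := by rw [hcom.eq]
      _ = (g 0 ^ u 0 * g 0 ^ v 0) * ((List.ofFn fun i : Fin k => g i.succ ^ u i.succ).prod *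
            (List.ofFn fun i : Fin k => g i.succ ^ v i.succ).prod) := by
          simp only [mul_assoc]
      _ = g 0 ^ (u 0 + v 0) * (List.ofFn fun i : Fin k => g i.succ ^ (u i.succ + v i.succ)).prod := by
          rw [IH, ← zpow_add]

lemma gmtAux_ofFn_zpow_ite : ∀ (k : ℕ) (g : Fin k → G) (i : Fin k) (c : ℤ),
    (List.ofFn fun j => g j ^ (if j = i then c else 0)).prod = g i ^ c
  | 0, g, i, c => i.elim0
  | (k+1), g, i, c => by
    induction i using Fin.cases with
    | zero =>
      simp only [List.ofFn_succ, List.prod_cons]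
      have h0 : ∀ j : Fin k, (if j.succ = (0 : Fin (k+1)) then c else 0) = 0 := by
        intro j; simp [Fin.succ_ne_zero]
      simp only [h0, if_pos rfl, zpow_zero]
      simp
    | succ i' =>
      have h0 : (if (0 : Fin (k+1)) = i'.succ then c else 0) = 0 := by
        simp [(Fin.succ_ne_zero i').symm, Fin.ext_iff]
      have h1 : ∀ j : Fin k, (if j.succ = i'.succ then c else 0) = (if j = i' then c else 0) := by
        intro j; simp [Fin.succ_inj]
      simp only [List.ofFn_succ, List.prod_cons, h0, h1, zpow_zero, one_mul]
      exact gmtAux_ofFn_zpow_ite k (fun j => g j.succ) i' c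

lemma gmtAux_conj_list (t : G) : ∀ l : List G,
    t * l.prod * t⁻¹ = (l.map fun x => t * x * t⁻¹).prod
  | [] => by simp
  | (x :: l) => by
    simp only [List.prod_cons, List.map_cons]
    rw [← gmtAux_conj_list t l]
    group

end ListLemmas

section GmTAux
variable {m : ℕ} {T : Matrix (Fin m) (Fin m) ℤ}

lemma gmtAux_rel_one {r : FreeGroup (Fin m ⊕ Unit)} (hr : r ∈ gmtRels m T) :
    PresentedGroup.mk (gmtRels m T) r = 1 :=
  (QuotientGroup.eq_one_iff r).mpr (Subgroup.subset_normalClosure hr)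

lemma gmtAux_comm (i j : Fin m) : Commute (gmtA m T i) (gmtA m T j) := by
  have h := gmtAux_rel_one (T := T) (Or.inl ⟨i, j, rfl⟩)
  simp only [map_mul, map_inv] at h
  rw [← commutatorElement_def] at h
  exact commutatorElement_eq_one_iff_commute.mp h

lemma gmtAux_rel_t (i : Fin m) :
    gmtT m T * gmtA m T i * (gmtT m T)⁻¹ = gmtAProd m T (fun j => T j i) := by
  have h := gmtAux_rel_one (T := T) (Or.inr ⟨i, rfl⟩)
  simp only [map_mul, map_inv, map_list_prod, List.map_ofFn, Function.comp_def, map_zpow] at h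
  rw [mul_inv_eq_one] at h
  exact h

lemma gmtAux_aP_add (u v : Fin m → ℤ) :
    gmtAProd m T (u + v) = gmtAProd m T u * gmtAProd m T v :=
  (gmtAux_ofFn_zpow_mul m (gmtA m T) gmtAux_comm u v).symm

lemma gmtAux_aP_zero : gmtAProd m T 0 = 1 := by
  simp [gmtAProd]

lemma gmtAux_aP_neg (u : Fin m → ℤ) : gmtAProd m T (-u) = (gmtAProd m T u)⁻¹ := by
  rw [eq_inv_iff_mul_eq_one, ← gmtAux_aP_add]
  simp [gmtAux_aP_zero]

lemma gmtAux_aP_smul (n : ℤ) (u : Fin m → ℤ) :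
    gmtAProd m T (n • u) = gmtAProd m T u ^ n := by
  induction n using Int.induction_on with
  | zero => simpa using gmtAux_aP_zero
  | succ k ih =>
    have : ((k : ℤ) + 1) • u = (k : ℤ) • u + u := by rw [add_smul, one_smul]
    rw [this, gmtAux_aP_add, ih, zpow_add, zpow_one]
  | pred k ih =>
    have : (-(k : ℤ) - 1) • u = (-(k : ℤ)) • u + (-u) := by rw [sub_smul, one_smul, neg_smul]; abel
    rw [this, gmtAux_aP_add, ih, gmtAux_aP_neg, zpow_sub, zpow_one]

lemma gmtAux_aP_listSum : ∀ l : List (Fin m → ℤ),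
    gmtAProd m T l.sum = (l.map (gmtAProd m T)).prod
  | [] => gmtAux_aP_zero
  | (x :: l) => by
    simp only [List.sum_cons, List.map_cons, List.prod_cons, gmtAux_aP_add,
      gmtAux_aP_listSum l]

lemma gmtAux_t_conj (u : Fin m → ℤ) :
    gmtT m T * gmtAProd m T u * (gmtT m T)⁻¹ = gmtAProd m T (T.mulVec u) := by
  have step1 : ∀ i : Fin m, gmtT m T * gmtA m T i ^ u i * (gmtT m T)⁻¹
      = gmtAProd m T (u i • fun j => T j i) := by
    intro i
    rw [gmtAux_aP_smul, ← gmtAux_rel_t i, conj_zpow]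
  calc gmtT m T * gmtAProd m T u * (gmtT m T)⁻¹
      = ((List.ofFn fun i => gmtA m T i ^ u i).map
          fun x => gmtT m T * x * (gmtT m T)⁻¹).prod := gmtAux_conj_list _ _
    _ = (List.ofFn fun i => gmtAProd m T (u i • fun j => T j i)).prod := by
        rw [List.map_ofFn]; exact congrArg (fun f => (List.ofFn f).prod) (funext step1)
    _ = ((List.ofFn fun i => (u i • fun j => T j i : Fin m → ℤ)).map (gmtAProd m T)).prod := by
        rw [List.map_ofFn]; rfl
    _ = gmtAProd m T ((List.ofFn fun i => (u i • fun j => T j i : Fin m → ℤ)).sum) :=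
        (gmtAux_aP_listSum _).symm
    _ = gmtAProd m T (T.mulVec u) := by
        congr 1
        rw [List.sum_ofFn]
        funext j
        simp only [Finset.sum_apply, Pi.smul_apply, smul_eq_mul, Matrix.mulVec, dotProduct]
        exact Finset.sum_congr rfl fun i _ => mul_comm _ _

lemma gmtAux_t_conj_inv {S : Matrix (Fin m) (Fin m) ℤ} (hTS : T * S = 1)
    (u : Fin m → ℤ) :
    (gmtT m T)⁻¹ * gmtAProd m T u * gmtT m T = gmtAProd m T (S.mulVec u) := by
  have h := gmtAux_t_conj (T := T) (S.mulVec u)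
  rw [Matrix.mulVec_mulVec, hTS, Matrix.one_mulVec] at h
  rw [← h]; group

lemma gmtAux_t_zpow_conj {S : Matrix (Fin m) (Fin m) ℤ} (hTS : T * S = 1) (hST : S * T = 1)
    (n : ℤ) : ∃ C : Matrix (Fin m) (Fin m) ℤ, Commute T C ∧ ∀ u : Fin m → ℤ,
      gmtT m T ^ n * gmtAProd m T u = gmtAProd m T ((1 + (T - 1) * C).mulVec u) * gmtT m T ^ n := by
  have hCommTS : Commute T S := by
    have h : T * S = S * T := by rw [hTS, hST]
    exact h
  induction n using Int.induction_on with
  | zero =>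
    refine ⟨0, Commute.zero_right T, ?_⟩
    intro u; simp
  | succ k ih =>
    obtain ⟨C, hC, hc⟩ := ih
    refine ⟨C * T + 1,
      Commute.add_right (hC.mul_right (Commute.refl T)) (Commute.one_right T), ?_⟩
    intro u
    have key : (1 + (T - 1) * C) * T = 1 + (T - 1) * (C * T + 1) := by noncomm_ring
    have ht : gmtT m T * gmtAProd m T u = gmtAProd m T (T.mulVec u) * gmtT m T := by
      have h := gmtAux_t_conj (T := T) u
      rw [← h]; group
    have hsplit : gmtT m T ^ ((k : ℤ) + 1) = gmtT m T ^ (k : ℤ) * gmtT m T := by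
      rw [zpow_add_one]
    calc gmtT m T ^ ((k : ℤ) + 1) * gmtAProd m T u
        = gmtT m T ^ (k : ℤ) * (gmtT m T * gmtAProd m T u) := by rw [hsplit, mul_assoc]
      _ = (gmtT m T ^ (k : ℤ) * gmtAProd m T (T.mulVec u)) * gmtT m T := by
          rw [ht, mul_assoc]
      _ = gmtAProd m T ((1 + (T - 1) * C).mulVec (T.mulVec u)) * gmtT m T ^ (k : ℤ) *
            gmtT m T := by rw [hc]
      _ = gmtAProd m T ((1 + (T - 1) * (C * T + 1)).mulVec u) * gmtT m T ^ ((k : ℤ) + 1) := by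
          rw [Matrix.mulVec_mulVec, key, hsplit, mul_assoc]
  | pred k ih =>
    obtain ⟨C, hC, hc⟩ := ih
    refine ⟨C * S - S, Commute.sub_right (hC.mul_right hCommTS) hCommTS, ?_⟩
    intro u
    have key : (1 + (T - 1) * C) * S = 1 + (T - 1) * (C * S - S) := by
      have h1 : (T - 1) * S = 1 - S := by rw [sub_mul, one_mul, hTS]
      have e1 : (1 + (T - 1) * C) * S = S + (T - 1) * (C * S) := by noncomm_ring
      have e2 : 1 + (T - 1) * (C * S - S) = 1 + (T - 1) * (C * S) - (T - 1) * S := by noncomm_ring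
      rw [e1, e2, h1]
      abel
    have ht : (gmtT m T)⁻¹ * gmtAProd m T u = gmtAProd m T (S.mulVec u) * (gmtT m T)⁻¹ := by
      have h := gmtAux_t_conj_inv hTS (T := T) u
      rw [← h]; group
    have hsplit : gmtT m T ^ (-(k : ℤ) - 1) = gmtT m T ^ (-(k : ℤ)) * (gmtT m T)⁻¹ := by
      rw [zpow_sub_one]
    calc gmtT m T ^ (-(k : ℤ) - 1) * gmtAProd m T u
        = gmtT m T ^ (-(k : ℤ)) * ((gmtT m T)⁻¹ * gmtAProd m T u) := by rw [hsplit, mul_assoc]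
      _ = (gmtT m T ^ (-(k : ℤ)) * gmtAProd m T (S.mulVec u)) * (gmtT m T)⁻¹ := by
          rw [ht, mul_assoc]
      _ = gmtAProd m T ((1 + (T - 1) * C).mulVec (S.mulVec u)) * gmtT m T ^ (-(k : ℤ)) *
            (gmtT m T)⁻¹ := by rw [hc]
      _ = gmtAProd m T ((1 + (T - 1) * (C * S - S)).mulVec u) * gmtT m T ^ (-(k : ℤ) - 1) := by
          rw [Matrix.mulVec_mulVec, key, hsplit, mul_assoc]

lemma gmtAux_form {S : Matrix (Fin m) (Fin m) ℤ} (hTS : T * S = 1) (hST : S * T = 1)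
    (g : GmT m T) : ∃ (u : Fin m → ℤ) (n : ℤ), g = gmtAProd m T u * gmtT m T ^ n := by
  let H : Subgroup (GmT m T) :=
    { carrier := {g | ∃ (u : Fin m → ℤ) (n : ℤ), g = gmtAProd m T u * gmtT m T ^ n}
      one_mem' := ⟨0, 0, by simp [gmtAux_aP_zero]⟩
      mul_mem' := by
        rintro x y ⟨u, p, rfl⟩ ⟨v, q, rfl⟩
        obtain ⟨C, _, hc⟩ := gmtAux_t_zpow_conj hTS hST p
        refine ⟨u + (1 + (T - 1) * C).mulVec v, p + q, ?_⟩
        rw [gmtAux_aP_add]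
        calc gmtAProd m T u * gmtT m T ^ p * (gmtAProd m T v * gmtT m T ^ q)
            = gmtAProd m T u * (gmtT m T ^ p * gmtAProd m T v) * gmtT m T ^ q := by
              simp only [mul_assoc]
          _ = gmtAProd m T u * (gmtAProd m T ((1 + (T - 1) * C).mulVec v) * gmtT m T ^ p) *
                gmtT m T ^ q := by rw [hc]
          _ = gmtAProd m T u * gmtAProd m T ((1 + (T - 1) * C).mulVec v) *
                gmtT m T ^ (p + q) := by rw [zpow_add]; simp only [mul_assoc]
      inv_mem' := by
        rintro x ⟨u, p, rfl⟩
        obtain ⟨C, _, hc⟩ := gmtAux_t_zpow_conj hTS hST (-p)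
        refine ⟨(1 + (T - 1) * C).mulVec (-u), -p, ?_⟩
        rw [mul_inv_rev, ← zpow_neg, ← gmtAux_aP_neg, ← hc] }
  have : g ∈ H := by
    apply PresentedGroup.generated_by
    intro j
    cases j with
    | inl i =>
      refine ⟨fun j => if j = i then 1 else 0, 0, ?_⟩
      show gmtA m T i = _
      rw [zpow_zero, mul_one]
      have h := gmtAux_ofFn_zpow_ite m (gmtA m T) i 1
      rw [zpow_one] at h
      exact h.symm
    | inr u =>
      refine ⟨0, 1, ?_⟩
      rw [gmtAux_aP_zero, one_mul, zpow_one]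
      rfl
  exact this

/-- The subgroup `{a^{(T-1)^k w}}`. -/
def gmtB (m : ℕ) (T : Matrix (Fin m) (Fin m) ℤ) (k : ℕ) : Subgroup (GmT m T) where
  carrier := {g | ∃ w : Fin m → ℤ, g = gmtAProd m T (((T - 1) ^ k).mulVec w)}
  one_mem' := ⟨0, by rw [Matrix.mulVec_zero, gmtAux_aP_zero]⟩
  mul_mem' := by
    rintro x y ⟨w1, rfl⟩ ⟨w2, rfl⟩
    exact ⟨w1 + w2, by rw [Matrix.mulVec_add, gmtAux_aP_add]⟩
  inv_mem' := by
    rintro x ⟨w, rfl⟩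
    exact ⟨-w, by rw [Matrix.mulVec_neg, gmtAux_aP_neg]⟩

lemma gmtAux_mem_gmtB {k : ℕ} {g : GmT m T} :
    g ∈ gmtB m T k ↔ ∃ w : Fin m → ℤ, g = gmtAProd m T (((T - 1) ^ k).mulVec w) := Iff.rfl

open scoped commutatorElement

lemma gmtAux_comm_succ {S : Matrix (Fin m) (Fin m) ℤ} (hTS : T * S = 1) (hST : S * T = 1)
    (k : ℕ) (h g : GmT m T) (hh : h ∈ gmtB m T k) : ⁅h, g⁆ ∈ gmtB m T (k + 1) := by
  obtain ⟨w, rfl⟩ := hh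
  obtain ⟨v, q, rfl⟩ := gmtAux_form hTS hST g
  obtain ⟨C, hC, hc⟩ := gmtAux_t_zpow_conj hTS hST q
  set N : Matrix (Fin m) (Fin m) ℤ := T - 1 with hN
  set u : Fin m → ℤ := (N ^ k).mulVec w with hu
  have hNC : Commute N C := hC.sub_left (Commute.one_left C)
  refine ⟨-(C.mulVec w), ?_⟩
  have hvec : u + v + -((1 + N * C).mulVec u) + -v = (N ^ (k + 1)).mulVec (-(C.mulVec w)) := by
    have e1 : (1 + N * C).mulVec u = u + (N * C).mulVec u := by
      rw [Matrix.add_mulVec, Matrix.one_mulVec]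
    have e2 : (N * C).mulVec u = (N ^ (k + 1)).mulVec (C.mulVec w) := by
      rw [hu, Matrix.mulVec_mulVec, Matrix.mulVec_mulVec]
      rw [mul_assoc, (hNC.symm.pow_right k).eq, ← mul_assoc, ← pow_succ']
    rw [e1, e2, Matrix.mulVec_neg]
    abel
  rw [← hvec]
  have hstep := hc (-u)
  rw [Matrix.mulVec_neg] at hstep
  calc ⁅gmtAProd m T u, gmtAProd m T v * gmtT m T ^ q⁆
      = gmtAProd m T u * (gmtAProd m T v * gmtT m T ^ q) * (gmtAProd m T u)⁻¹ *
        (gmtAProd m T v * gmtT m T ^ q)⁻¹ := rfl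
    _ = gmtAProd m T u * gmtAProd m T v * (gmtT m T ^ q * gmtAProd m T (-u)) *
        (gmtT m T ^ q)⁻¹ * gmtAProd m T (-v) := by
        rw [mul_inv_rev, ← gmtAux_aP_neg, ← gmtAux_aP_neg]
        simp only [mul_assoc]
    _ = gmtAProd m T u * gmtAProd m T v * (gmtAProd m T (-((1 + N * C).mulVec u)) *
          gmtT m T ^ q) * (gmtT m T ^ q)⁻¹ * gmtAProd m T (-v) := by rw [hstep]
    _ = gmtAProd m T u * gmtAProd m T v * gmtAProd m T (-((1 + N * C).mulVec u)) *
          gmtAProd m T (-v) := by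
        simp only [mul_assoc, mul_inv_cancel, mul_one]
    _ = gmtAProd m T (u + v + -((1 + N * C).mulVec u) + -v) := by
        rw [gmtAux_aP_add, gmtAux_aP_add, gmtAux_aP_add]

lemma gmtAux_comm_one {S : Matrix (Fin m) (Fin m) ℤ} (hTS : T * S = 1) (hST : S * T = 1)
    (h g : GmT m T) : ⁅h, g⁆ ∈ gmtB m T 1 := by
  obtain ⟨u, r, rfl⟩ := gmtAux_form hTS hST h
  obtain ⟨v, q, rfl⟩ := gmtAux_form hTS hST g
  obtain ⟨C1, hC1, hc1⟩ := gmtAux_t_zpow_conj hTS hST r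
  obtain ⟨C2, hC2, hc2⟩ := gmtAux_t_zpow_conj hTS hST (q - r)
  set N : Matrix (Fin m) (Fin m) ℤ := T - 1 with hN
  set M1 : Matrix (Fin m) (Fin m) ℤ := 1 + N * C1 with hM1
  set M2 : Matrix (Fin m) (Fin m) ℤ := 1 + N * C2 with hM2
  set E : Matrix (Fin m) (Fin m) ℤ := C1 + C2 + C1 * (N * C2) with hE
  refine ⟨C1.mulVec v - E.mulVec u, ?_⟩
  have hME : M1 * M2 = 1 + N * E := by rw [hM1, hM2, hE]; noncomm_ring
  have hvec : u + M1.mulVec v + (M1.mulVec (M2.mulVec (-u)) + -v)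
      = (N ^ 1).mulVec (C1.mulVec v - E.mulVec u) := by
    rw [Matrix.mulVec_mulVec, Matrix.mulVec_neg, hME, pow_one]
    have e1 : M1.mulVec v = v + N.mulVec (C1.mulVec v) := by
      rw [hM1, Matrix.add_mulVec, Matrix.one_mulVec, ← Matrix.mulVec_mulVec]
    have e2 : (1 + N * E).mulVec u = u + N.mulVec (E.mulVec u) := by
      rw [Matrix.add_mulVec, Matrix.one_mulVec, ← Matrix.mulVec_mulVec]
    rw [e1, e2, Matrix.mulVec_sub]
    abel
  rw [← hvec]
  have h1 : gmtT m T ^ r * gmtAProd m T v = gmtAProd m T (M1.mulVec v) * gmtT m T ^ r := hc1 v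
  have h2 : gmtT m T ^ (q - r) * gmtAProd m T (-u)
      = gmtAProd m T (M2.mulVec (-u)) * gmtT m T ^ (q - r) := hc2 (-u)
  have h3 : gmtT m T ^ r * gmtAProd m T (M2.mulVec (-u))
      = gmtAProd m T (M1.mulVec (M2.mulVec (-u))) * gmtT m T ^ r := hc1 _
  have hq : gmtT m T ^ q * (gmtT m T ^ r)⁻¹ = gmtT m T ^ (q - r) := by
    rw [← zpow_neg, ← zpow_add, ← sub_eq_add_neg]
  have hqr : gmtT m T ^ r * gmtT m T ^ (q - r) = gmtT m T ^ q := by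
    rw [← zpow_add]; ring_nf
  calc ⁅gmtAProd m T u * gmtT m T ^ r, gmtAProd m T v * gmtT m T ^ q⁆
      = gmtAProd m T u * (gmtT m T ^ r * gmtAProd m T v) * ((gmtT m T ^ q *
          (gmtT m T ^ r)⁻¹) * gmtAProd m T (-u)) * ((gmtT m T ^ q)⁻¹ * gmtAProd m T (-v)) := by
        rw [commutatorElement_def, mul_inv_rev, mul_inv_rev, ← gmtAux_aP_neg, ← gmtAux_aP_neg]
        simp only [mul_assoc]
    _ = gmtAProd m T u * (gmtAProd m T (M1.mulVec v) * gmtT m T ^ r) * (gmtT m T ^ (q - r) *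
          gmtAProd m T (-u)) * ((gmtT m T ^ q)⁻¹ * gmtAProd m T (-v)) := by rw [h1, hq]
    _ = gmtAProd m T u * gmtAProd m T (M1.mulVec v) * ((gmtT m T ^ r *
          gmtAProd m T (M2.mulVec (-u))) * gmtT m T ^ (q - r)) *
          ((gmtT m T ^ q)⁻¹ * gmtAProd m T (-v)) := by
        rw [h2]; simp only [mul_assoc]
    _ = gmtAProd m T u * gmtAProd m T (M1.mulVec v) *
          (gmtAProd m T (M1.mulVec (M2.mulVec (-u))) * (gmtT m T ^ r * gmtT m T ^ (q - r))) *
          ((gmtT m T ^ q)⁻¹ * gmtAProd m T (-v)) := by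
        rw [h3]; simp only [mul_assoc]
    _ = gmtAProd m T u * gmtAProd m T (M1.mulVec v) *
          (gmtAProd m T (M1.mulVec (M2.mulVec (-u))) * gmtAProd m T (-v)) := by
        rw [hqr]
        simp only [mul_assoc, mul_inv_cancel_left]
    _ = gmtAProd m T (u + M1.mulVec v + (M1.mulVec (M2.mulVec (-u)) + -v)) := by
        rw [gmtAux_aP_add, gmtAux_aP_add, gmtAux_aP_add]



open Polynomial in
lemma gmtAux_charpoly (m : ℕ) (T : Matrix (Fin m) (Fin m) ℤ)
    (h : ∀ z ∈ (Matrix.charpoly (T.map (Int.cast : ℤ → ℂ))).roots, z = 1) :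
    ((T - 1) ^ m : Matrix (Fin m) (Fin m) ℤ) = 0 := by
  set p : ℂ[X] := (T.map (Int.cast : ℤ → ℂ)).charpoly with hp
  have hmonic : p.Monic := Matrix.charpoly_monic _
  have hdeg : p.natDegree = m := by
    rw [hp, Matrix.charpoly_natDegree_eq_dim, Fintype.card_fin]
  have hsplit : p.Splits := IsAlgClosed.splits p
  have hcard : p.roots.card = m := by
    rw [← hdeg]
    exact (Polynomial.splits_iff_card_roots.mp hsplit)
  have hprod : p = (X - C 1) ^ m := by
    have := hsplit.eq_prod_roots_of_monic hmonic
    rw [this]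
    have : p.roots.map (fun a => X - C a) = p.roots.map (fun _ => X - C 1) :=
      Multiset.map_congr rfl (fun z hz => by rw [h z hz])
    rw [this, Multiset.map_const', Multiset.prod_replicate, hcard]
  have hcp : T.charpoly = (X - C 1) ^ m := by
    have hmap : T.charpoly.map (Int.castRingHom ℂ) = ((X - C 1 : ℤ[X]) ^ m).map
        (Int.castRingHom ℂ) := by
      rw [← Matrix.charpoly_map]
      rw [Polynomial.map_pow, Polynomial.map_sub, Polynomial.map_X, Polynomial.map_C, map_one]
      exact hprod
    exact Polynomial.map_injective _ Int.cast_injective hmap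
  have := Matrix.aeval_self_charpoly T
  rw [hcp] at this
  rw [map_pow, map_sub, Polynomial.aeval_X] at this
  simpa using this

lemma gmtAux_invertible (m : ℕ) (T : Matrix (Fin m) (Fin m) ℤ)
    (hN : ((T - 1) ^ m : Matrix (Fin m) (Fin m) ℤ) = 0) :
    ∃ S : Matrix (Fin m) (Fin m) ℤ, T * S = 1 ∧ S * T = 1 := by
  have h0 : ((1 - T) ^ m : Matrix (Fin m) (Fin m) ℤ) = 0 := by
    rw [show (1 - T : Matrix (Fin m) (Fin m) ℤ) = -(T - 1) by rw [neg_sub], neg_pow, hN,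
      mul_zero]
  have hsub : (1 - T - 1 : Matrix (Fin m) (Fin m) ℤ) = -T := by abel
  refine ⟨∑ j ∈ Finset.range m, (1 - T) ^ j, ?_, ?_⟩
  · have hgeo := mul_geom_sum (1 - T) m
    rw [h0, hsub, zero_sub] at hgeo
    have := congrArg Neg.neg hgeo
    simpa [neg_mul] using this
  · have hgeo := geom_sum_mul (1 - T) m
    rw [h0, hsub, zero_sub] at hgeo
    have := congrArg Neg.neg hgeo
    simpa [mul_neg] using this

end GmTAux

/-- If all complex eigenvalues of `T` equal `1` (and `det T ≠ 0`), then the ascending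
HNN-extension `G(m,T)` is nilpotent. -/
theorem stmt10 (m : ℕ) (T : Matrix (Fin m) (Fin m) ℤ) (hdet : T.det ≠ 0)
    (h : ∀ z ∈ (Matrix.charpoly (T.map (Int.cast : ℤ → ℂ))).roots, z = 1) :
    Group.IsNilpotent (GmT m T) := by
  have hN := gmtAux_charpoly m T h
  obtain ⟨S, hTS, hST⟩ := gmtAux_invertible m T hN
  rw [nilpotent_iff_lowerCentralSeries]
  refine ⟨m + 1, ?_⟩
  have key : ∀ k : ℕ, (⊤ : Subgroup (GmT m T)).lowerCentralSeries (k + 1) ≤ gmtB m T (k + 1) := by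
    intro k
    induction k with
    | zero =>
      rw [show (⊤ : Subgroup (GmT m T)).lowerCentralSeries 1 = ⁅(⊤ : Subgroup (GmT m T)).lowerCentralSeries 0, ⊤⁆ from rfl]
      refine Subgroup.commutator_le.mpr fun g1 _ g2 _ => ?_
      exact gmtAux_comm_one hTS hST g1 g2
    | succ k ih =>
      rw [show (⊤ : Subgroup (GmT m T)).lowerCentralSeries (k + 2)
          = ⁅(⊤ : Subgroup (GmT m T)).lowerCentralSeries (k + 1), ⊤⁆ from rfl]
      refine Subgroup.commutator_le.mpr fun g1 hg1 g2 _ => ?_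
      exact gmtAux_comm_succ hTS hST (k + 1) g1 g2 (ih hg1)
  have hbot : gmtB m T (m + 1) ≤ ⊥ := by
    rintro g ⟨w, rfl⟩
    rw [pow_succ, hN, zero_mul, Matrix.zero_mulVec, gmtAux_aP_zero]
    exact Subgroup.one_mem ⊥
  exact le_bot_iff.mp ((key m).trans hbot)
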